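/- Let v_1, …, v_n ∈ ℝ^n be vectors of the form v_i = e_i − a_i e_{σ(i)}, where 0 ≤ a_i < 1 for each i, σ : {1,…,n} → {1,…,n} is an arbitrary function, and e_1,…,e_n is the standard basis. Then the convex cone ℝ_{≥0} v_1 + ⋯ + ℝ_{≥0} v_n contains every standard basis vector e_i. -/
import Mathlib


/-- Let `v₁, …, vₙ ∈ ℝⁿ` be vectors of the form `vᵢ = eᵢ − aᵢ e_{σ(i)}`,
where `0 ≤ aᵢ < 1` and `σ : {1,…,n} → {1,…,n}` is an arbitrary function.  Then the convex
cone `ℝ_{≥0} v₁ + ⋯ + ℝ_{≥0} vₙ` contains every standard basis vector `eᵢ`. -/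
theorem stmt1 (n : ℕ) (a : Fin n → ℝ) (σ : Fin n → Fin n)
    (ha0 : ∀ i, 0 ≤ a i) (ha1 : ∀ i, a i < 1)
    (v : Fin n → Fin n → ℝ)
    (hv : ∀ i, v i = (Pi.single i 1 : Fin n → ℝ) - a i • (Pi.single (σ i) 1 : Fin n → ℝ))
    (i : Fin n) :
    ∃ c : Fin n → ℝ, (∀ j, 0 ≤ c j) ∧
      (Pi.single i 1 : Fin n → ℝ) = ∑ j : Fin n, c j • v j := by
  classical
  set m : ℝ := Finset.univ.sup' ⟨i, Finset.mem_univ i⟩ a with hm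
  have hm0 : 0 ≤ m := le_trans (ha0 i) (Finset.le_sup' a (Finset.mem_univ i))
  have hm1 : m < 1 := (Finset.sup'_lt_iff _).mpr (fun j _ => ha1 j)
  set p : ℕ → ℝ := fun k => ∏ l ∈ Finset.range k, a (σ^[l] i) with hpdef
  have hp0 : ∀ k, 0 ≤ p k := fun k => Finset.prod_nonneg (fun l _ => ha0 _)
  have hpsucc : ∀ k, p (k + 1) = p k * a (σ^[k] i) := fun k => Finset.prod_range_succ _ _
  have hpm : ∀ k, p k ≤ m ^ k := by
    intro k
    induction k with
    | zero => simp [hpdef]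
    | succ k ih =>
      rw [hpsucc, pow_succ]
      exact mul_le_mul ih (Finset.le_sup' a (Finset.mem_univ _)) (ha0 _)
        (pow_nonneg hm0 k)
  have hsum : Summable p :=
    Summable.of_nonneg_of_le hp0 hpm (summable_geometric_of_lt_one hm0 hm1)
  -- the coefficient family
  have hsumf : ∀ j : Fin n, Summable (fun k => if σ^[k] i = j then p k else 0) := by
    intro j
    refine Summable.of_nonneg_of_le (fun k => ?_) (fun k => ?_) hsum
    · split <;> simp [hp0]
    · split <;> simp [hp0]
  set c : Fin n → ℝ := fun j => ∑' k, if σ^[k] i = j then p k else 0 with hcdef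
  have hc0 : ∀ j, 0 ≤ c j := fun j => tsum_nonneg (fun k => by split <;> simp [hp0])
  refine ⟨c, hc0, ?_⟩
  funext k
  -- evaluate RHS at coordinate k
  have hRHS : (∑ j : Fin n, c j • v j) k
      = c k - ∑ j : Fin n, (if σ j = k then c j * a j else 0) := by
    rw [Finset.sum_apply]
    have : ∀ j : Fin n, (c j • v j) k
        = c j * (if k = j then 1 else 0) - (if σ j = k then c j * a j else 0) := by
      intro j
      rw [hv j]
      simp only [Pi.smul_apply, Pi.sub_apply, Pi.single_apply, smul_eq_mul]
      have e1 : (if k = σ j then (1:ℝ) else 0) = if σ j = k then 1 else 0 := by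
        by_cases h : σ j = k
        · simp [h]
        · simp [h, Ne.symm h]
      rw [e1]; split_ifs <;> ring
    rw [Finset.sum_congr rfl (fun j _ => this j), Finset.sum_sub_distrib]
    congr 1
    rw [Finset.sum_eq_single k]
    · simp
    · intro b _ hb; simp [Ne.symm hb]
    · simp
  rw [hRHS]
  -- rewrite the subtracted sum as a shifted tsum
  have hshift : (∑ j : Fin n, (if σ j = k then c j * a j else 0))
      = ∑' mm : ℕ, (if σ^[mm + 1] i = k then p (mm + 1) else 0) := by
    have h1 : ∀ j : Fin n, (if σ j = k then c j * a j else 0)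
        = ∑' mm : ℕ, (if σ^[mm] i = j then (if σ j = k then p mm * a j else 0) else 0) := by
      intro j
      by_cases h : σ j = k
      · simp only [h, if_true, hcdef]
        rw [← tsum_mul_right]
        congr 1; funext mm; split <;> simp
      · simp [h]
    rw [Finset.sum_congr rfl (fun j _ => h1 j)]
    rw [← Summable.tsum_finsetSum]
    · congr 1; funext mm
      rw [Finset.sum_eq_single (σ^[mm] i)]
      · rw [Function.iterate_succ_apply', hpsucc]
        simp
      · intro b _ hb; simp [Ne.symm hb]
      · simp
    · intro j _
      refine Summable.of_nonneg_of_le (fun mm => ?_) (fun mm => ?_) hsum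
      · split
        · split
          · exact mul_nonneg (hp0 _) (ha0 _)
          · exact le_refl 0
        · exact le_refl 0
      · split
        · split
          · calc p mm * a j ≤ p mm * 1 :=
                mul_le_mul_of_nonneg_left (le_of_lt (ha1 j)) (hp0 mm)
              _ = p mm := mul_one _
          · exact hp0 mm
        · exact hp0 mm
  rw [hshift]
  have hck : c k = (if σ^[0] i = k then p 0 else 0)
      + ∑' mm : ℕ, (if σ^[mm + 1] i = k then p (mm + 1) else 0) := by
    rw [hcdef]
    exact Summable.tsum_eq_zero_add (hsumf k)
  rw [hck]
  simp only [Function.iterate_zero_apply, hpdef, Finset.range_zero, Finset.prod_empty]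
  rw [Pi.single_apply]
  ring_nf
  by_cases h : i = k <;> simp [h, eq_comm]
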